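/- Let Q denote the Gaussian tail function Q(x) = ∫_x^∞ (1/√(2π)) e^{-t²/2} dt. Fix K ∈ ℕ, M > 0, σ > 0, and for each k = 0, …, K−1 let c_k ≥ 0, g_k ≥ 0 and P_m^{(k)}(γ) = 1 - Q((γ - M(σ² + g_k))/(σ √(2M(σ² + 2g_k)))). Then the aggregate interference function G(γ₀, …, γ_{K−1}) = Σ_{k=0}^{K−1} c_k P_m^{(k)}(γ_k) is a convex function on the convex set {γ ∈ ℝ^K : γ_k ≤ M(σ² + g_k) for all k}. -/

import Mathlib

/-- The Gaussian tail function `Q(x) = ∫_x^∞ (1/√(2π)) e^{-t²/2} dt`. -/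
noncomputable def gaussQ (x : ℝ) : ℝ :=
  ∫ t in Set.Ioi x, (Real.sqrt (2 * Real.pi))⁻¹ * Real.exp (-t ^ 2 / 2)

open MeasureTheory Set

/-- The standard Gaussian density. -/
noncomputable def gpdf (t : ℝ) : ℝ :=
  (Real.sqrt (2 * Real.pi))⁻¹ * Real.exp (-t ^ 2 / 2)

lemma gpdf_continuous : Continuous gpdf := by
  unfold gpdf; fun_prop

lemma gpdf_integrable : Integrable gpdf := by
  have h : Integrable (fun t : ℝ => Real.exp (-(1/2 : ℝ) * t ^ 2)) :=
    integrable_exp_neg_mul_sq (by norm_num)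
  have h2 := h.const_mul (Real.sqrt (2 * Real.pi))⁻¹
  refine h2.congr (Filter.Eventually.of_forall fun t => ?_)
  unfold gpdf; ring_nf

lemma gaussQ_eq (x : ℝ) : gaussQ x = gaussQ 0 - ∫ t in (0:ℝ)..x, gpdf t := by
  have key : ∀ a b : ℝ, a ≤ b → gaussQ a = (∫ t in Set.Ioc a b, gpdf t) + gaussQ b := by
    intro a b hab
    have h1 : gaussQ a = ∫ t in Set.Ioi a, gpdf t := rfl
    have h2 : gaussQ b = ∫ t in Set.Ioi b, gpdf t := rfl
    rw [h1, h2, ← Set.Ioc_union_Ioi_eq_Ioi hab,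
      setIntegral_union (Set.Ioc_disjoint_Ioi le_rfl) measurableSet_Ioi
        gpdf_integrable.integrableOn gpdf_integrable.integrableOn]
  rcases le_or_gt 0 x with h | h
  · have := key 0 x h
    rw [intervalIntegral.integral_of_le h]
    linarith
  · have := key x 0 h.le
    rw [intervalIntegral.integral_symm, intervalIntegral.integral_of_le h.le]
    linarith

lemma phi_hasDerivAt (x : ℝ) : HasDerivAt (fun u => 1 - gaussQ u) (gpdf x) x := by
  have h1 : HasDerivAt (fun u => ∫ t in (0:ℝ)..u, gpdf t) (gpdf x) x :=
    intervalIntegral.integral_hasDerivAt_right gpdf_integrable.intervalIntegrable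
      gpdf_continuous.stronglyMeasurable.stronglyMeasurableAtFilter
      gpdf_continuous.continuousAt
  have h2 := h1.const_add (1 - gaussQ 0)
  have hfun : (fun u => 1 - gaussQ 0 + ∫ t in (0:ℝ)..u, gpdf t) = fun u => 1 - gaussQ u := by
    funext u; rw [gaussQ_eq u]; ring
  rwa [hfun] at h2

lemma phi_convexOn : ConvexOn ℝ (Set.Iic (0:ℝ)) (fun u => 1 - gaussQ u) := by
  have hd : ∀ x : ℝ, deriv (fun u => 1 - gaussQ u) x = gpdf x := fun x =>
    (phi_hasDerivAt x).deriv
  have hmono : MonotoneOn (deriv fun u => 1 - gaussQ u) (interior (Set.Iic (0:ℝ))) := by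
    rw [interior_Iic]
    intro x hx y hy hxy
    rw [hd, hd]
    have hx0 : x < 0 := hx
    have hy0 : y < 0 := hy
    have hsq : -x ^ 2 / 2 ≤ -y ^ 2 / 2 := by nlinarith
    exact mul_le_mul_of_nonneg_left (Real.exp_le_exp.2 hsq)
      (inv_nonneg.2 (Real.sqrt_nonneg _))
  exact hmono.convexOn_of_deriv (convex_Iic 0)
    (fun x _ => (phi_hasDerivAt x).continuousAt.continuousWithinAt)
    (fun x _ => (phi_hasDerivAt x).differentiableAt.differentiableWithinAt)

/-- the aggregate interference
`G(γ) = Σ_k c_k (1 - Q((γ_k - M(σ²+g_k))/(σ√(2M(σ²+2g_k)))))` is convex on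
`{γ ∈ ℝ^K : γ_k ≤ M(σ²+g_k) for all k}`. -/
theorem aggregate_Pm_convexOn (K : ℕ) (M σ : ℝ) (hM : 0 < M) (hσ : 0 < σ)
    (c g : Fin K → ℝ) (hc : ∀ k, 0 ≤ c k) (hg : ∀ k, 0 ≤ g k) :
    ConvexOn ℝ {γ : Fin K → ℝ | ∀ k, γ k ≤ M * (σ ^ 2 + g k)}
      (fun γ : Fin K → ℝ =>
        ∑ k : Fin K,
          c k * (1 - gaussQ ((γ k - M * (σ ^ 2 + g k)) /
            (σ * Real.sqrt (2 * M * (σ ^ 2 + 2 * g k)))))) := by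
  classical
  set S : Set (Fin K → ℝ) := {γ : Fin K → ℝ | ∀ k, γ k ≤ M * (σ ^ 2 + g k)} with hSdef
  have hS : Convex ℝ S := by
    intro x hx y hy t s ht hs hts k
    have hxk := hx k
    have hyk := hy k
    simp only [Pi.add_apply, Pi.smul_apply, smul_eq_mul]
    have h1 : t * x k + s * y k ≤ t * (M * (σ ^ 2 + g k)) + s * (M * (σ ^ 2 + g k)) :=
      add_le_add (mul_le_mul_of_nonneg_left hxk ht) (mul_le_mul_of_nonneg_left hyk hs)
    have h2 : t * (M * (σ ^ 2 + g k)) + s * (M * (σ ^ 2 + g k)) = M * (σ ^ 2 + g k) := by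
      rw [← add_mul, hts, one_mul]
    linarith
  have hb : ∀ k, 0 < σ * Real.sqrt (2 * M * (σ ^ 2 + 2 * g k)) := by
    intro k
    have h1 : 0 < σ ^ 2 + 2 * g k := by nlinarith [hg k, pow_pos hσ 2]
    have h : 0 < 2 * M * (σ ^ 2 + 2 * g k) := mul_pos (mul_pos two_pos hM) h1
    exact mul_pos hσ (Real.sqrt_pos.2 h)
  have hterm : ∀ k : Fin K, ConvexOn ℝ S
      (fun γ : Fin K → ℝ => c k * (1 - gaussQ ((γ k - M * (σ ^ 2 + g k)) /
        (σ * Real.sqrt (2 * M * (σ ^ 2 + 2 * g k)))))) := by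
    intro k
    set a := M * (σ ^ 2 + g k)
    set b := σ * Real.sqrt (2 * M * (σ ^ 2 + 2 * g k))
    have hbk : 0 < b := hb k
    refine ⟨hS, ?_⟩
    intro x hx y hy t s ht hs hts
    have hu : (x k - a) / b ∈ Set.Iic (0:ℝ) := by
      simp only [Set.mem_Iic]
      have hxa : x k ≤ a := hx k
      exact div_nonpos_of_nonpos_of_nonneg (by linarith) hbk.le
    have hv : (y k - a) / b ∈ Set.Iic (0:ℝ) := by
      simp only [Set.mem_Iic]
      have hya : y k ≤ a := hy k
      exact div_nonpos_of_nonpos_of_nonneg (by linarith) hbk.le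
    have harg : ((t • x + s • y) k - a) / b
        = t * ((x k - a) / b) + s * ((y k - a) / b) := by
      have h0 : (t • x + s • y) k - a = t * (x k - a) + s * (y k - a) := by
        simp only [Pi.add_apply, Pi.smul_apply, smul_eq_mul]
        linear_combination M * (σ ^ 2 + g k) * hts
      rw [h0, add_div, mul_div_assoc, mul_div_assoc]
    have hφ := phi_convexOn.2 hu hv ht hs hts
    simp only [smul_eq_mul] at hφ ⊢
    rw [harg]
    calc c k * (1 - gaussQ (t * ((x k - a) / b) + s * ((y k - a) / b)))
        ≤ c k * (t * (1 - gaussQ ((x k - a) / b)) + s * (1 - gaussQ ((y k - a) / b))) :=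
          mul_le_mul_of_nonneg_left hφ (hc k)
      _ = t * (c k * (1 - gaussQ ((x k - a) / b))) + s * (c k * (1 - gaussQ ((y k - a) / b))) := by
          ring
  have hsum : ∀ F : Finset (Fin K), ConvexOn ℝ S
      (fun γ : Fin K → ℝ => ∑ k ∈ F,
        c k * (1 - gaussQ ((γ k - M * (σ ^ 2 + g k)) /
          (σ * Real.sqrt (2 * M * (σ ^ 2 + 2 * g k)))))) := by
    intro F
    induction F using Finset.induction with
    | empty => simpa using convexOn_const (0:ℝ) hS
    | insert _ _ hnm ih =>
        simp only [Finset.sum_insert hnm]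
        exact (hterm _).add ih
  exact hsum Finset.univ
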